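/- Let S_1(d) be the set of d×d 0/1-matrices M with rank(M) = d−1 and strong rank 1. Then |S_1(d)| = |G(d)| · (d!/2) · (d−1) for all d ≥ 2. -/

import Mathlib

open scoped Classical
open Filter Matrix

noncomputable section

/-- A 0/1-matrix (with `Bool` entries) viewed as a real matrix. -/
def bmToR {m n : Type*} (M : Matrix m n Bool) : Matrix m n ℝ :=
  fun i j => if M i j then 1 else 0

/-- A 0/1-vector (with `Bool` entries) viewed as a vector in `ℝ^d`. -/
def bvToR {d : ℕ} (v : Fin d → Bool) : Fin d → ℝ := fun i => if v i then 1 else 0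

/-- `Gset d` is the set of all linearly independent `(d-1)`-element sets of 0/1-vectors in `ℝ^d`. -/
def Gset (d : ℕ) : Finset (Finset (Fin d → Bool)) :=
  Finset.univ.filter (fun G => G.card = d - 1 ∧
    LinearIndependent ℝ (fun v : {x // x ∈ G} => bvToR v.1))

/-- `vnum S` is the number of 0/1-vectors in the linear span of the set `S` of 0/1-vectors. -/
def vnum {d : ℕ} (S : Finset (Fin d → Bool)) : ℕ :=
  (Finset.univ.filter (fun x : Fin d → Bool =>
    bvToR x ∈ Submodule.span ℝ (bvToR '' (S : Set (Fin d → Bool))))).card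

/-- `Ed d` is the expected number of 0/1-points on the hyperplane spanned by a uniformly
random linearly independent set of `d - 1` 0/1-vectors. -/
def Ed (d : ℕ) : ℝ := (∑ G ∈ Gset d, (vnum G : ℝ)) / (Gset d).card

/-- The strong rank of a real `d × d` matrix: the largest `k ≤ d` such that every
`k`-element subset of the columns is linearly independent. -/
def strongRank {d : ℕ} (M : Matrix (Fin d) (Fin d) ℝ) : ℕ :=
  sSup {k | k ≤ d ∧ ∀ s : Finset (Fin d), s.card = k →
    LinearIndependent ℝ (fun j : {x // x ∈ s} => Mᵀ j.1)}

/-! ### Auxiliary lemmas -/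

lemma bvToR_injective {d : ℕ} : Function.Injective (bvToR (d := d)) := by
  intro a b h
  funext i
  have h' := congrFun h i
  simp only [bvToR] at h'
  cases ha : a i <;> cases hb : b i <;> simp [ha, hb] at h' ⊢

/-- Two distinct nonzero 0/1 vectors are linearly independent. -/
lemma li_pair_bv {d : ℕ} {a b : Fin d → Bool} (hna : bvToR a ≠ 0) (hnb : bvToR b ≠ 0)
    (hab : a ≠ b) : LinearIndependent ℝ ![bvToR a, bvToR b] := by
  rw [linearIndependent_fin2]
  refine ⟨by simpa using hnb, fun t ht => ?_⟩
  -- t • bvToR b = bvToR a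
  simp only [Matrix.cons_val_one, Matrix.head_cons, Matrix.cons_val_zero] at ht
  have hbtrue : ∃ i, b i = true := by
    by_contra hno
    push_neg at hno
    apply hnb
    funext i
    simp [bvToR, hno i]
  obtain ⟨i, hi⟩ := hbtrue
  have hti : t = bvToR a i := by
    have := congrFun ht i
    simpa [bvToR, hi] using this
  rcases (show t = 0 ∨ t = 1 by
    rw [hti]; simp only [bvToR]; split <;> simp) with h0 | h1
  · apply hna; rw [← ht, h0, zero_smul]
  · apply hab; apply bvToR_injective; rw [← ht, h1, one_smul]

/-- A family on the subtype of a pair finset is linearly independent iff the pair is. -/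
lemma li_pair_subtype {ι : Type*} [DecidableEq ι] {V : Type*} [AddCommGroup V] [Module ℝ V]
    {a b : ι} (hab : a ≠ b) (v : ι → V) :
    LinearIndependent ℝ (fun j : {x // x ∈ ({a, b} : Finset ι)} => v j.1) ↔
      LinearIndependent ℝ ![v a, v b] := by
  let e : Fin 2 ≃ {x // x ∈ ({a, b} : Finset ι)} :=
    { toFun := ![⟨a, by simp⟩, ⟨b, by simp⟩]
      invFun := fun x => if x.1 = a then 0 else 1
      left_inv := by
        intro x
        fin_cases x <;> simp [hab.symm]
      right_inv := by
        intro x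
        rcases Finset.mem_insert.1 x.2 with h | h
        · simp [Subtype.ext_iff, h]
        · have hb' : x.1 = b := Finset.mem_singleton.1 h
          have : x.1 ≠ a := by rw [hb']; exact hab.symm
          have h1 : (if x.1 = a then (0 : Fin 2) else 1) = 1 := if_neg this
          simp only [h1]
          exact Subtype.ext (by simp [hb']) }
  have hcomp : (fun j : {x // x ∈ ({a, b} : Finset ι)} => v j.1) ∘ e = ![v a, v b] := by
    funext x
    fin_cases x <;> rfl
  exact (linearIndependent_equiv' e hcomp).symm

/-- Restricting a linearly independent subtype family to a subset. -/
lemma li_mono {ι : Type*} {V : Type*} [AddCommGroup V] [Module ℝ V]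
    {s t : Finset ι} (hst : s ⊆ t) (v : ι → V)
    (h : LinearIndependent ℝ (fun j : {x // x ∈ t} => v j.1)) :
    LinearIndependent ℝ (fun j : {x // x ∈ s} => v j.1) := by
  exact h.comp (fun x => ⟨x.1, hst x.2⟩) (fun x y hxy => Subtype.ext (by
    simpa using congrArg Subtype.val hxy))

/-- Characterization: rank `d-1` and strong rank `1` iff the column image is in `Gset d`. -/
lemma char_lemma {d : ℕ} (hd : 2 ≤ d) (N : Matrix (Fin d) (Fin d) Bool) :
    ((bmToR N).rank = d - 1 ∧ strongRank (bmToR N) = 1) ↔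
      (Finset.image (fun j i => N i j) Finset.univ) ∈ Gset d := by
  set M := bmToR N with hM
  set c : Fin d → (Fin d → Bool) := fun j i => N i j with hc
  set G : Finset (Fin d → Bool) := Finset.image c Finset.univ with hG
  have hcol : Mᵀ = fun j => bvToR (c j) := rfl
  have hrangeG : Set.range c = (G : Set (Fin d → Bool)) := by
    rw [hG, Finset.coe_image, Finset.coe_univ, Set.image_univ]
  have hrank : M.rank = Module.finrank ℝ (Submodule.span ℝ (bvToR '' (G : Set (Fin d → Bool)))) := by
    have hr : Set.range Mᵀ = bvToR '' (G : Set (Fin d → Bool)) := by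
      rw [hcol, show (fun j => bvToR (c j)) = bvToR ∘ c from rfl, Set.range_comp, hrangeG]
    rw [Matrix.rank_eq_finrank_span_cols, show Set.range M.col = Set.range Mᵀ from rfl, hr]
  have hspan_range : Set.range (fun v : {x // x ∈ G} => bvToR v.1)
      = bvToR '' (G : Set (Fin d → Bool)) := by
    ext y
    simp
  set S : Set ℕ := {k | k ≤ d ∧ ∀ s : Finset (Fin d), s.card = k →
    LinearIndependent ℝ (fun j : {x // x ∈ s} => Mᵀ j.1)} with hS
  have hSR : strongRank M = sSup S := rfl
  have h0S : 0 ∈ S := by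
    refine ⟨Nat.zero_le d, fun s hs => ?_⟩
    have hse : s = ∅ := Finset.card_eq_zero.1 hs
    haveI : IsEmpty {x // x ∈ s} := ⟨fun x => absurd x.2 (by simp [hse])⟩
    exact linearIndependent_empty_type
  have hbdd : BddAbove S := ⟨d, fun k hk => hk.1⟩
  constructor
  · rintro ⟨h1, h2⟩
    rw [hSR] at h2
    have h1S : 1 ∈ S := by
      have := Nat.sSup_mem ⟨0, h0S⟩ hbdd
      rwa [h2] at this
    have h2S : 2 ∉ S := by
      intro h
      have := le_csSup hbdd h
      omega
    have hnz : ∀ j, bvToR (c j) ≠ 0 := by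
      intro j
      have hli := h1S.2 {j} (Finset.card_singleton j)
      have := hli.ne_zero ⟨j, Finset.mem_singleton_self j⟩
      rwa [show Mᵀ j = bvToR (c j) from congrFun hcol j] at this
    have hex : ∃ s : Finset (Fin d), s.card = 2 ∧
        ¬ LinearIndependent ℝ (fun j : {x // x ∈ s} => Mᵀ j.1) := by
      by_contra hall
      push_neg at hall
      exact h2S ⟨hd, fun s hs => hall s hs⟩
    obtain ⟨s, hs2, hsnli⟩ := hex
    obtain ⟨a, b, hab, rfl⟩ := Finset.card_eq_two.1 hs2
    replace hsnli := mt (li_pair_subtype hab Mᵀ).2 hsnli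
    have hcab : c a = c b := by
      by_contra hne
      apply hsnli
      rw [show Mᵀ a = bvToR (c a) from congrFun hcol a,
        show Mᵀ b = bvToR (c b) from congrFun hcol b]
      exact li_pair_bv (hnz a) (hnz b) hne
    have hGle : G.card ≤ d - 1 := by
      have hGeq : G = Finset.image c (Finset.univ.erase a) := by
        apply Finset.Subset.antisymm
        · intro x hx
          obtain ⟨j, _, rfl⟩ := Finset.mem_image.1 hx
          by_cases hja : j = a
          · subst hja
            exact Finset.mem_image.2 ⟨b, Finset.mem_erase.2 ⟨Ne.symm hab, Finset.mem_univ b⟩,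
              hcab.symm⟩
          · exact Finset.mem_image.2 ⟨j, Finset.mem_erase.2 ⟨hja, Finset.mem_univ j⟩, rfl⟩
        · exact Finset.image_subset_image (fun x _ => Finset.mem_univ x)
      calc G.card = (Finset.image c (Finset.univ.erase a)).card := by rw [← hGeq]
      _ ≤ (Finset.univ.erase a).card := Finset.card_image_le
      _ = d - 1 := by
        rw [Finset.card_erase_of_mem (Finset.mem_univ a), Finset.card_univ, Fintype.card_fin]
    have hGge : d - 1 ≤ G.card := by
      have h1' : Module.finrank ℝ (Submodule.span ℝ (bvToR '' (G : Set (Fin d → Bool)))) = d - 1 := by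
        rw [← hrank, h1]
      have hle : Module.finrank ℝ (Submodule.span ℝ (bvToR '' (G : Set (Fin d → Bool))))
          ≤ (Finset.image bvToR G).card := by
        rw [← Finset.coe_image]
        exact finrank_span_finset_le_card (Finset.image bvToR G)
      have := Finset.card_image_le (f := bvToR) (s := G)
      omega
    have hGcard : G.card = d - 1 := le_antisymm hGle hGge
    have hLI : LinearIndependent ℝ (fun v : {x // x ∈ G} => bvToR v.1) := by
      rw [linearIndependent_iff_card_eq_finrank_span, Fintype.card_coe, hGcard, hspan_range]
      show d - 1 = Module.finrank ℝ (Submodule.span ℝ (bvToR '' (G : Set (Fin d → Bool))))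
      rw [← hrank, h1]
    exact Finset.mem_filter.2 ⟨Finset.mem_univ _, hGcard, hLI⟩
  · intro hGmem
    obtain ⟨-, hGcard, hLI⟩ := Finset.mem_filter.1 hGmem
    have hfr : Module.finrank ℝ (Submodule.span ℝ (bvToR '' (G : Set (Fin d → Bool)))) = d - 1 := by
      have := linearIndependent_iff_card_eq_finrank_span.1 hLI
      rw [Fintype.card_coe, hGcard, hspan_range] at this
      exact this.symm
    have hnz : ∀ j, Mᵀ j ≠ 0 := by
      intro j
      have hmem : c j ∈ G := Finset.mem_image_of_mem c (Finset.mem_univ j)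
      have := hLI.ne_zero ⟨c j, hmem⟩
      rwa [show Mᵀ j = bvToR (c j) from congrFun hcol j]
    refine ⟨by rw [hrank, hfr], ?_⟩
    rw [hSR]
    have h1S : 1 ∈ S := by
      refine ⟨le_trans one_le_two hd, fun s hs => ?_⟩
      obtain ⟨j, rfl⟩ := Finset.card_eq_one.1 hs
      haveI : Unique {x // x ∈ ({j} : Finset (Fin d))} :=
        ⟨⟨⟨j, Finset.mem_singleton_self j⟩⟩,
          fun x => Subtype.ext (Finset.mem_singleton.1 x.2)⟩
      have hdef : ((default : {x // x ∈ ({j} : Finset (Fin d))}) : Fin d) = j :=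
        Finset.mem_singleton.1 (Subtype.prop _)
      refine linearIndependent_unique_iff.2 ?_
      simpa [hdef] using hnz j
    have hdup : ∃ a b : Fin d, a ≠ b ∧ c a = c b := by
      have hlt : G.card < (Finset.univ : Finset (Fin d)).card := by
        rw [Finset.card_univ, Fintype.card_fin, hGcard]; omega
      obtain ⟨a, -, b, -, hab, hcab⟩ := Finset.exists_ne_map_eq_of_card_lt_of_maps_to hlt
        (fun x _ => Finset.mem_image_of_mem c (Finset.mem_univ x))
      exact ⟨a, b, hab, hcab⟩
    obtain ⟨a, b, hab, hcab⟩ := hdup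
    have hbound : ∀ k ∈ S, k ≤ 1 := by
      intro k hk
      by_contra hgt
      push_neg at hgt
      obtain ⟨s, hsub, hscard⟩ := Finset.exists_superset_card_eq
        (s := ({a, b} : Finset (Fin d))) (n := k)
        (by rw [Finset.card_pair hab]; omega)
        (by rw [Fintype.card_fin]; exact hk.1)
      have hLIs := hk.2 s hscard
      have hLIab := li_mono hsub _ hLIs
      have hMab : Mᵀ a = Mᵀ b := by
        rw [show Mᵀ a = bvToR (c a) from congrFun hcol a,
          show Mᵀ b = bvToR (c b) from congrFun hcol b, hcab]
      have := hLIab.injective (a₁ := ⟨a, by simp⟩) (a₂ := ⟨b, by simp⟩) hMab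
      exact hab (by simpa [Subtype.ext_iff] using this)
    exact le_antisymm (csSup_le ⟨0, h0S⟩ hbound) (le_csSup hbdd h1S)

/-- If all fibers over a finset `s` have size `≥ 1` and the total is `s.card`,
then every fiber has size `1`. -/
lemma all_one {β : Type*} {s : Finset β} {f : β → ℕ} (h1 : ∀ i ∈ s, 1 ≤ f i)
    (hsum : ∑ i ∈ s, f i = s.card) : ∀ i ∈ s, f i = 1 := by
  intro i hi
  by_contra hne
  have h2 : 2 ≤ f i := by
    have := h1 i hi; omega
  have : ∑ j ∈ s.erase i, f j ≥ (s.erase i).card := by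
    calc (s.erase i).card = ∑ _j ∈ s.erase i, 1 := by simp
    _ ≤ ∑ j ∈ s.erase i, f j :=
      Finset.sum_le_sum (fun j hj => h1 j (Finset.mem_of_mem_erase hj))
  have hsplit : f i + ∑ j ∈ s.erase i, f j = ∑ j ∈ s, f j := Finset.add_sum_erase s f hi
  have hc : (s.erase i).card = s.card - 1 := Finset.card_erase_of_mem hi
  have hcard1 : 1 ≤ s.card := Finset.card_pos.2 ⟨i, hi⟩
  omega

/-- In a function `Fin d → (Fin d → Bool)` with image a `(d-1)`-set `G` whose fiber over
`v` has two elements, all other fibers are singletons. -/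
lemma fibers_one {d : ℕ} (hd : 2 ≤ d) {G : Finset (Fin d → Bool)} (hG : G.card = d - 1)
    {c : Fin d → (Fin d → Bool)} (him : Finset.image c Finset.univ = G)
    {v : Fin d → Bool} (hv : v ∈ G)
    (h2 : (Finset.univ.filter (fun j => c j = v)).card = 2) :
    ∀ w ∈ G, w ≠ v → (Finset.univ.filter (fun j => c j = w)).card = 1 := by
  have hsum : (Finset.univ : Finset (Fin d)).card
      = ∑ w ∈ G, (Finset.univ.filter (fun j => c j = w)).card :=
    Finset.card_eq_sum_card_fiberwise
      (fun x _ => him ▸ Finset.mem_image_of_mem c (Finset.mem_univ x))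
  rw [Finset.card_univ, Fintype.card_fin] at hsum
  rw [← Finset.add_sum_erase G _ hv] at hsum
  have hone : ∀ w ∈ G.erase v, 1 ≤ (Finset.univ.filter (fun j => c j = w)).card := by
    intro w hw
    obtain ⟨jw, -, hjw⟩ := Finset.mem_image.1 (him ▸ Finset.mem_of_mem_erase hw)
    exact Finset.card_pos.2 ⟨jw, Finset.mem_filter.2 ⟨Finset.mem_univ jw, hjw⟩⟩
  have hcerase : (G.erase v).card = d - 2 := by
    rw [Finset.card_erase_of_mem hv, hG]; omega
  have hsumerase : ∑ w ∈ G.erase v, (Finset.univ.filter (fun j => c j = w)).card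
      = (G.erase v).card := by
    rw [hcerase]; omega
  intro w hw hwv
  exact all_one hone hsumerase w (Finset.mem_erase.2 ⟨hwv, hw⟩)

/-- Every function with image a `(d-1)`-set has a (unique) doubled value. -/
lemma fiber_two_exists {d : ℕ} (hd : 2 ≤ d) {G : Finset (Fin d → Bool)} (hG : G.card = d - 1)
    {c : Fin d → (Fin d → Bool)} (him : Finset.image c Finset.univ = G) :
    ∃ v ∈ G, (Finset.univ.filter (fun j => c j = v)).card = 2 := by
  have hlt : G.card < (Finset.univ : Finset (Fin d)).card := by
    rw [Finset.card_univ, Fintype.card_fin, hG]; omega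
  obtain ⟨a, -, b, -, hab, hcab⟩ := Finset.exists_ne_map_eq_of_card_lt_of_maps_to hlt
    (fun x _ => him ▸ Finset.mem_image_of_mem c (Finset.mem_univ x))
  set v := c a with hvdef
  have hvG : v ∈ G := him ▸ Finset.mem_image_of_mem c (Finset.mem_univ a)
  refine ⟨v, hvG, ?_⟩
  have hge : 2 ≤ (Finset.univ.filter (fun j => c j = v)).card := by
    have hsub : ({a, b} : Finset (Fin d)) ⊆ Finset.univ.filter (fun j => c j = v) := by
      intro x hx
      rcases Finset.mem_insert.1 hx with h | h
      · subst h; exact Finset.mem_filter.2 ⟨Finset.mem_univ x, rfl⟩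
      · have : x = b := Finset.mem_singleton.1 h
        subst this
        exact Finset.mem_filter.2 ⟨Finset.mem_univ x, hcab.symm⟩
    calc 2 = ({a, b} : Finset (Fin d)).card := (Finset.card_pair hab).symm
    _ ≤ _ := Finset.card_le_card hsub
  have hsum : (Finset.univ : Finset (Fin d)).card
      = ∑ w ∈ G, (Finset.univ.filter (fun j => c j = w)).card :=
    Finset.card_eq_sum_card_fiberwise
      (fun x _ => him ▸ Finset.mem_image_of_mem c (Finset.mem_univ x))
  rw [Finset.card_univ, Fintype.card_fin] at hsum
  rw [← Finset.add_sum_erase G _ hvG] at hsum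
  have hone : (G.erase v).card ≤ ∑ w ∈ G.erase v, (Finset.univ.filter (fun j => c j = w)).card := by
    refine Finset.card_nsmul_le_sum _ _ 1 (fun w hw => ?_) |>.trans_eq' (by simp)
    obtain ⟨jw, -, hjw⟩ := Finset.mem_image.1 (him ▸ Finset.mem_of_mem_erase hw)
    exact Finset.card_pos.2 ⟨jw, Finset.mem_filter.2 ⟨Finset.mem_univ jw, hjw⟩⟩
  have hcerase : (G.erase v).card = d - 2 := by
    rw [Finset.card_erase_of_mem hvG, hG]; omega
  omega

/-- The number of functions with image `G`, whose fiber over `v ∈ G` is exactly the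
2-element set `s`, is `(d-2)!`. -/
lemma count_Bv {d : ℕ} (hd : 2 ≤ d) {G : Finset (Fin d → Bool)} (hG : G.card = d - 1)
    {v : Fin d → Bool} (hv : v ∈ G) {s : Finset (Fin d)} (hs : s.card = 2) :
    (Finset.univ.filter (fun c : Fin d → (Fin d → Bool) =>
      Finset.image c Finset.univ = G ∧ Finset.univ.filter (fun j => c j = v) = s)).card
    = (d - 2).factorial := by
  have hcs : Fintype.card {x // x ∈ sᶜ} = d - 2 := by
    rw [Fintype.card_coe, Finset.card_compl, hs, Fintype.card_fin]
  have hce : Fintype.card {x // x ∈ G.erase v} = d - 2 := by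
    rw [Fintype.card_coe, Finset.card_erase_of_mem hv, hG]; omega
  have hcard_eq : Fintype.card ({x // x ∈ sᶜ} ≃ {x // x ∈ G.erase v}) = (d - 2).factorial := by
    rw [Fintype.card_equiv (Fintype.equivOfCardEq (hcs.trans hce.symm)), hcs]
  rw [← hcard_eq, ← Finset.card_univ]
  refine Finset.card_bij'
    (i := fun c hc => Equiv.ofBijective (fun x => ⟨c x.1, by
      have him := (Finset.mem_filter.1 hc).2.1
      have hfib := (Finset.mem_filter.1 hc).2.2
      refine Finset.mem_erase.2 ⟨?_, him ▸ Finset.mem_image_of_mem c (Finset.mem_univ x.1)⟩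
      intro hcv
      have : x.1 ∈ s := by
        have h' : x.1 ∈ Finset.univ.filter (fun j => c j = v) :=
          Finset.mem_filter.2 ⟨Finset.mem_univ x.1, hcv⟩
        rwa [hfib] at h'
      exact (Finset.mem_compl.1 x.2) this⟩) (by
      have him := (Finset.mem_filter.1 hc).2.1
      have hfib := (Finset.mem_filter.1 hc).2.2
      refine (Fintype.bijective_iff_injective_and_card _).2 ⟨?_, hcs.trans hce.symm⟩
      intro x y hxy
      have hcxy : c x.1 = c y.1 := congrArg Subtype.val hxy
      by_contra hne
      have hxy1 : x.1 ≠ y.1 := fun h => hne (Subtype.ext h)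
      have hwG : c x.1 ∈ G := him ▸ Finset.mem_image_of_mem c (Finset.mem_univ x.1)
      have hwv : c x.1 ≠ v := by
        intro hwv
        have : x.1 ∈ s := by
          have h' : x.1 ∈ Finset.univ.filter (fun j => c j = v) :=
            Finset.mem_filter.2 ⟨Finset.mem_univ x.1, hwv⟩
          rwa [hfib] at h'
        exact (Finset.mem_compl.1 x.2) this
      have h2ge : 2 ≤ (Finset.univ.filter (fun j => c j = c x.1)).card := by
        have hsub : ({x.1, y.1} : Finset (Fin d)) ⊆ Finset.univ.filter (fun j => c j = c x.1) := by
          intro z hz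
          refine Finset.mem_filter.2 ⟨Finset.mem_univ z, ?_⟩
          rcases Finset.mem_insert.1 hz with h | h
          · rw [h]
          · rw [Finset.mem_singleton.1 h]; exact hcxy.symm
        calc 2 = ({x.1, y.1} : Finset (Fin d)).card := (Finset.card_pair hxy1).symm
        _ ≤ _ := Finset.card_le_card hsub
      have := fibers_one hd hG him hv (by rw [hfib]; exact hs) (c x.1) hwG hwv
      omega))
    (j := fun e _ => fun j => if h : j ∈ sᶜ then (e ⟨j, h⟩).1 else v)
    ?_ ?_ ?_ ?_
  · -- i maps into univ
    intro c hc
    exact Finset.mem_univ _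
  · -- j maps into the filter
    intro e _
    refine Finset.mem_filter.2 ⟨Finset.mem_univ _, ?_, ?_⟩
    · -- image is G
      apply Finset.Subset.antisymm
      · intro w hw
        obtain ⟨j, -, rfl⟩ := Finset.mem_image.1 hw
        by_cases h : j ∈ sᶜ
        · simp only [dif_pos h]
          exact Finset.mem_of_mem_erase (e ⟨j, h⟩).2
        · simp only [dif_neg h]; exact hv
      · intro w hw
        by_cases hwv : w = v
        · subst hwv
          have hspos : 0 < s.card := by omega
          obtain ⟨j, hj⟩ := Finset.card_pos.1 hspos
          refine Finset.mem_image.2 ⟨j, Finset.mem_univ j, ?_⟩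
          simp only [dif_neg (show ¬ j ∈ sᶜ by simpa using hj)]
        · have hwe : w ∈ G.erase v := Finset.mem_erase.2 ⟨hwv, hw⟩
          set x := e.symm ⟨w, hwe⟩ with hx
          refine Finset.mem_image.2 ⟨x.1, Finset.mem_univ _, ?_⟩
          simp only [dif_pos x.2]
          have : e ⟨x.1, x.2⟩ = ⟨w, hwe⟩ := by
            rw [show (⟨x.1, x.2⟩ : {x // x ∈ sᶜ}) = x from rfl, hx, Equiv.apply_symm_apply]
          rw [this]
    · -- fiber over v is s
      ext j
      simp only [Finset.mem_filter, Finset.mem_univ, true_and]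
      by_cases h : j ∈ sᶜ
      · simp only [dif_pos h]
        constructor
        · intro habs
          exact absurd habs (Finset.mem_erase.1 (e ⟨j, h⟩).2).1
        · intro hj
          exact absurd hj (by simpa using h)
      · simp only [dif_neg h]
        simp only [Finset.mem_compl, not_not] at h
        exact ⟨fun _ => h, fun _ => trivial⟩
  · -- left inverse
    intro c hc
    obtain ⟨-, him, hfib⟩ := Finset.mem_filter.1 hc
    funext j
    by_cases h : j ∈ sᶜ
    · simp only [dif_pos h]
      rfl
    · simp only [dif_neg h]
      simp only [Finset.mem_compl, not_not] at h
      have : j ∈ Finset.univ.filter (fun j => c j = v) := hfib ▸ h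
      exact ((Finset.mem_filter.1 this).2).symm
  · -- right inverse
    intro e _
    ext x i
    simp only [Equiv.ofBijective_apply, dif_pos x.2]

/-- Count of functions `Fin d → (Fin d → Bool)` whose image is a given `(d-1)`-set. -/
lemma count_surj {d : ℕ} (hd : 2 ≤ d) (G : Finset (Fin d → Bool)) (hG : G.card = d - 1) :
    (Finset.univ.filter (fun c : Fin d → (Fin d → Bool) =>
        Finset.image c Finset.univ = G)).card
      = (d - 1) * (d.choose 2 * (d - 2).factorial) := by
  set Av : (Fin d → Bool) → Finset (Fin d → (Fin d → Bool)) := fun v =>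
    Finset.univ.filter (fun c => Finset.image c Finset.univ = G ∧
      (Finset.univ.filter (fun j => c j = v)).card = 2) with hAv
  have hunion : Finset.univ.filter (fun c : Fin d → (Fin d → Bool) =>
      Finset.image c Finset.univ = G) = G.biUnion Av := by
    ext c
    simp only [hAv, Finset.mem_biUnion, Finset.mem_filter, Finset.mem_univ, true_and]
    constructor
    · intro him
      obtain ⟨v, hvG, hv2⟩ := fiber_two_exists hd hG him
      exact ⟨v, hvG, him, hv2⟩
    · rintro ⟨v, -, him, -⟩
      exact him
  have hdisj : ∀ v ∈ G, ∀ w ∈ G, v ≠ w → Disjoint (Av v) (Av w) := by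
    intro v hvG w hwG hvw
    rw [Finset.disjoint_left]
    intro c hcv hcw
    obtain ⟨-, him, h2v⟩ := Finset.mem_filter.1 hcv
    obtain ⟨-, -, h2w⟩ := Finset.mem_filter.1 hcw
    have h1 := fibers_one hd hG him hvG h2v w hwG (Ne.symm hvw)
    omega
  have hAvcard : ∀ v ∈ G, (Av v).card = d.choose 2 * (d - 2).factorial := by
    intro v hvG
    have hfw : (Av v).card = ∑ s ∈ Finset.powersetCard 2 (Finset.univ : Finset (Fin d)),
        ((Av v).filter (fun c => Finset.univ.filter (fun j => c j = v) = s)).card :=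
      Finset.card_eq_sum_card_fiberwise (fun c hc => by
        obtain ⟨-, -, h2⟩ := Finset.mem_filter.1 hc
        exact Finset.mem_powersetCard.2 ⟨Finset.subset_univ _, h2⟩)
    rw [hfw]
    have hconst : ∀ s ∈ Finset.powersetCard 2 (Finset.univ : Finset (Fin d)),
        ((Av v).filter (fun c => Finset.univ.filter (fun j => c j = v) = s)).card
          = (d - 2).factorial := by
      intro s hsmem
      obtain ⟨-, hs2⟩ := Finset.mem_powersetCard.1 hsmem
      have heq : (Av v).filter (fun c => Finset.univ.filter (fun j => c j = v) = s)
          = Finset.univ.filter (fun c : Fin d → (Fin d → Bool) =>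
              Finset.image c Finset.univ = G ∧ Finset.univ.filter (fun j => c j = v) = s) := by
        ext c
        simp only [hAv, Finset.filter_filter, Finset.mem_filter, Finset.mem_univ, true_and]
        constructor
        · rintro ⟨⟨him, -⟩, hfib⟩; exact ⟨him, hfib⟩
        · rintro ⟨him, hfib⟩
          exact ⟨⟨him, by rw [hfib, hs2]⟩, hfib⟩
      rw [heq]
      exact count_Bv hd hG hvG hs2
    rw [Finset.sum_congr rfl hconst, Finset.sum_const, Finset.card_powersetCard,
      Finset.card_univ, Fintype.card_fin, smul_eq_mul]
  rw [hunion, Finset.card_biUnion hdisj, Finset.sum_congr rfl hAvcard, Finset.sum_const,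
    smul_eq_mul, hG]

theorem stmt9 (d : ℕ) (hd : 2 ≤ d) :
    ((Finset.univ.filter (fun M : Matrix (Fin d) (Fin d) Bool =>
        (bmToR M).rank = d - 1 ∧ strongRank (bmToR M) = 1)).card : ℝ)
      = ((Gset d).card : ℝ) * ((d.factorial : ℝ) / 2) * ((d : ℝ) - 1) := by
  have hmain : (Finset.univ.filter (fun M : Matrix (Fin d) (Fin d) Bool =>
      (bmToR M).rank = d - 1 ∧ strongRank (bmToR M) = 1)).card
      = (Gset d).card * ((d - 1) * (d.choose 2 * (d - 2).factorial)) := by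
    have hfilt : Finset.univ.filter (fun M : Matrix (Fin d) (Fin d) Bool =>
        (bmToR M).rank = d - 1 ∧ strongRank (bmToR M) = 1)
        = Finset.univ.filter (fun M : Matrix (Fin d) (Fin d) Bool =>
            Finset.image (fun j i => M i j) Finset.univ ∈ Gset d) :=
      Finset.filter_congr (fun M _ => char_lemma hd M)
    rw [hfilt]
    have hbij : (Finset.univ.filter (fun M : Matrix (Fin d) (Fin d) Bool =>
        Finset.image (fun j i => M i j) Finset.univ ∈ Gset d)).card
        = (Finset.univ.filter (fun c : Fin d → (Fin d → Bool) =>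
            Finset.image c Finset.univ ∈ Gset d)).card := by
      refine Finset.card_bij' (i := fun M _ => fun j i => M i j)
        (j := fun c _ => fun i j => c j i) ?_ ?_ ?_ ?_
      · intro M hM
        exact Finset.mem_filter.2 ⟨Finset.mem_univ _, (Finset.mem_filter.1 hM).2⟩
      · intro c hc
        exact Finset.mem_filter.2 ⟨Finset.mem_univ _, (Finset.mem_filter.1 hc).2⟩
      · intro M _; rfl
      · intro c _; rfl
    rw [hbij]
    have hfib : (Finset.univ.filter (fun c : Fin d → (Fin d → Bool) =>
        Finset.image c Finset.univ ∈ Gset d)).card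
        = ∑ G ∈ Gset d, (Finset.univ.filter (fun c : Fin d → (Fin d → Bool) =>
            Finset.image c Finset.univ = G)).card := by
      rw [Finset.card_eq_sum_card_fiberwise
        (f := fun c : Fin d → (Fin d → Bool) => Finset.image c Finset.univ)
        (s := Finset.univ.filter (fun c : Fin d → (Fin d → Bool) => Finset.image c Finset.univ ∈ Gset d))
        (t := Gset d) (fun c hc => (Finset.mem_filter.1 (Finset.mem_coe.1 hc)).2)]
      refine Finset.sum_congr rfl (fun G hGmem => ?_)
      congr 1
      ext c
      simp only [Finset.filter_filter, Finset.mem_filter, Finset.mem_univ, true_and]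
      constructor
      · rintro ⟨-, h⟩; exact h
      · intro h; exact ⟨h ▸ hGmem, h⟩
    rw [hfib]
    have hcount : ∀ G ∈ Gset d, (Finset.univ.filter (fun c : Fin d → (Fin d → Bool) =>
        Finset.image c Finset.univ = G)).card = (d - 1) * (d.choose 2 * (d - 2).factorial) :=
      fun G hGmem => count_surj hd G (Finset.mem_filter.1 hGmem).2.1
    rw [Finset.sum_congr rfl hcount, Finset.sum_const, smul_eq_mul]
  have h2 : (2 : ℕ) * (d.choose 2 * (d - 2).factorial) = d.factorial := by
    have h := Nat.choose_mul_factorial_mul_factorial hd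
    norm_num [Nat.factorial] at h
    calc (2 : ℕ) * (d.choose 2 * (d - 2).factorial)
        = d.choose 2 * 2 * (d - 2).factorial := by ring
    _ = d.factorial := h
  have hKR : ((d.choose 2 * (d - 2).factorial : ℕ) : ℝ) = (d.factorial : ℝ) / 2 := by
    have h2' : ((2 : ℝ)) * ((d.choose 2 * (d - 2).factorial : ℕ) : ℝ) = (d.factorial : ℝ) := by
      exact_mod_cast congrArg (fun n : ℕ => (n : ℝ)) h2
    linarith
  rw [hmain, Nat.cast_mul, Nat.cast_mul, hKR, Nat.cast_sub (by omega : 1 ≤ d), Nat.cast_one]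
  ring
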